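/- Let V be a finite nonempty set of n vertices and let S : V → V → ℝ be a symmetric, nonnegative separation function with S v v = 0 satisfying the triangle inequality: S x z ≤ S x y + S y z for all x, y, z ∈ V. Let h : Fin n ≃ V be any Hamiltonian path ordering and define C : V → ℝ by C(h 0) = 0 and C(h i) = Σ_{k=0}^{i−1} S (h k) (h (k+1)) for i ≥ 1. Then C is a valid assignment: |C x − C y| ≥ S x y for all distinct x, y ∈ V. -/

import Mathlib

open Finset

variable {V : Type*}

/-- The canonical assignment along a Hamiltonian path ordering `h`:
`C (h i) = Σ_{k=0}^{i-1} S (h k) (h (k+1))` (so `C (h 0) = 0`). -/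
noncomputable def prefixAssignment (n : ℕ) (S : V → V → ℝ) (h : Fin n ≃ V) : V → ℝ :=
  fun v =>
    ∑ k : Fin n,
      if hk : (k : ℕ) + 1 ≤ ((h.symm v : Fin n) : ℕ) then
        S (h k) (h ⟨(k : ℕ) + 1, by have := (h.symm v).isLt; omega⟩)
      else 0

/-- An assignment is valid if `|C x − C y| ≥ S x y` for all distinct `x, y`. -/
def IsValidAssignment (S : V → V → ℝ) (C : V → ℝ) : Prop :=
  ∀ x y : V, x ≠ y → S x y ≤ |C x - C y|

/-- Edge weights as a function on ℕ. -/
noncomputable def edgeW (n : ℕ) (S : V → V → ℝ) (h : Fin n ≃ V) : ℕ → ℝ :=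
  fun k => if hk : k + 1 < n then S (h ⟨k, by omega⟩) (h ⟨k + 1, hk⟩) else 0

lemma prefixAssignment_eq_range (n : ℕ) (S : V → V → ℝ) (h : Fin n ≃ V) (v : V) :
    prefixAssignment n S h v = ∑ k ∈ Finset.range ((h.symm v : Fin n) : ℕ), edgeW n S h k := by
  unfold prefixAssignment
  rw [Fin.sum_univ_eq_sum_range
    (fun k => if hk : k + 1 ≤ ((h.symm v : Fin n) : ℕ) then
        S (h ⟨k, by have := (h.symm v).isLt; omega⟩) (h ⟨k + 1, by have := (h.symm v).isLt; omega⟩)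
      else 0)]
  rw [← Finset.sum_subset (Finset.range_subset_range.2 (h.symm v).isLt.le)]
  · apply Finset.sum_congr rfl
    intro k hk
    simp only [Finset.mem_range] at hk
    have hk1 : k + 1 ≤ ((h.symm v : Fin n) : ℕ) := hk
    have hk2 : k + 1 < n := lt_of_le_of_lt hk1 (h.symm v).isLt
    rw [dif_pos hk1, edgeW, dif_pos hk2]
  · intro k _ hk
    simp only [Finset.mem_range, not_lt] at hk
    rw [dif_neg (by omega)]

lemma path_lower_bound (n : ℕ) (S : V → V → ℝ)
    (hdiag : ∀ v : V, S v v = 0)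
    (htri : ∀ x y z : V, S x z ≤ S x y + S y z)
    (h : Fin n ≃ V) :
    ∀ d a b : ℕ, (hab : b = a + d) → (hb : b < n) →
      S (h ⟨a, by omega⟩) (h ⟨b, hb⟩) ≤ ∑ k ∈ Finset.Ico a b, edgeW n S h k := by
  intro d
  induction d with
  | zero =>
    intro a b hab hb
    have heq : (⟨a, by omega⟩ : Fin n) = ⟨b, hb⟩ := by simp only [Fin.mk.injEq]; omega
    rw [heq, hdiag]
    have : Finset.Ico a b = ∅ := by rw [Finset.Ico_eq_empty_iff]; omega
    simp [this]
  | succ d ih =>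
    intro a b hab hb
    subst hab
    have hb' : a + d < n := by omega
    have := ih a (a + d) rfl hb'
    have hstep : S (h ⟨a + d, hb'⟩) (h ⟨a + (d + 1), hb⟩) = edgeW n S h (a + d) := by
      rw [edgeW, dif_pos (by omega : a + d + 1 < n)]
      rfl
    calc S (h ⟨a, by omega⟩) (h ⟨a + (d + 1), hb⟩)
        ≤ S (h ⟨a, by omega⟩) (h ⟨a + d, hb'⟩) + S (h ⟨a + d, hb'⟩) (h ⟨a + (d + 1), hb⟩) := htri _ _ _
      _ ≤ (∑ k ∈ Finset.Ico a (a + d), edgeW n S h k) + edgeW n S h (a + d) := by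
          rw [hstep]; exact add_le_add_left this _
      _ = ∑ k ∈ Finset.Ico a (a + (d + 1)), edgeW n S h k := by
          rw [show a + (d + 1) = a + d + 1 from rfl,
            Finset.sum_Ico_succ_top (by omega : a ≤ a + d)]

theorem prefixAssignment_isValid
    [Fintype V] [Nonempty V] (n : ℕ) (hn : 0 < n) (hcard : Fintype.card V = n)
    (S : V → V → ℝ)
    (hsymm : ∀ x y : V, S x y = S y x)
    (hnonneg : ∀ x y : V, 0 ≤ S x y)
    (hdiag : ∀ v : V, S v v = 0)
    (htri : ∀ x y z : V, S x z ≤ S x y + S y z)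
    (h : Fin n ≃ V) :
    IsValidAssignment S (prefixAssignment n S h) := by
  -- main lemma: for i ≤ j, S (h i) (h j) ≤ C (h j) - C (h i)
  have key : ∀ x y : V, ((h.symm x : Fin n) : ℕ) ≤ ((h.symm y : Fin n) : ℕ) →
      S x y ≤ prefixAssignment n S h y - prefixAssignment n S h x := by
    intro x y hle
    rw [prefixAssignment_eq_range, prefixAssignment_eq_range,
      ← Finset.sum_Ico_eq_sub _ hle]
    have hb := (h.symm y).isLt
    have := path_lower_bound n S hdiag htri h
      (((h.symm y : Fin n) : ℕ) - ((h.symm x : Fin n) : ℕ))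
      ((h.symm x : Fin n) : ℕ) ((h.symm y : Fin n) : ℕ) (by omega) hb
    simpa using this
  intro x y hxy
  rcases le_total ((h.symm x : Fin n) : ℕ) ((h.symm y : Fin n) : ℕ) with hle | hle
  · calc S x y ≤ prefixAssignment n S h y - prefixAssignment n S h x := key x y hle
      _ ≤ |prefixAssignment n S h y - prefixAssignment n S h x| := le_abs_self _
      _ = |prefixAssignment n S h x - prefixAssignment n S h y| := abs_sub_comm _ _
  · rw [hsymm]
    calc S y x ≤ prefixAssignment n S h x - prefixAssignment n S h y := key y x hle
      _ ≤ |prefixAssignment n S h x - prefixAssignment n S h y| := le_abs_self _
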